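/- Let $\hat a : [0,2\pi) \to [0,\infty)$ be a bounded measurable function and let $A = \mathcal{F}^{-1} M_{\hat a} \mathcal{F}$ be the corresponding translation-invariant bounded operator on $\ell^2(\mathbb{Z})$, where $\mathcal{F}$ is the Fourier transform unitary $\ell^2(\mathbb{Z}) \to L^2([0,2\pi))$ and $M_{\hat a}$ is multiplication by $\hat a$. If for some $n \in \mathbb{N}$ the compression $V_n^* A V_n$ to the span of $\{\mathbf{1}_{\{0\}},\ldots,\mathbf{1}_{\{n-1\}}\}$ has $0$ as an eigenvalue, then $\hat a = 0$ almost everywhere. -/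

import Mathlib

open MeasureTheory Finset

/-- Lebesgue measure restricted to `[0, 2π)`. -/
noncomputable def μ2π : Measure ℝ := volume.restrict (Set.Ico 0 (2 * Real.pi))

/-- The canonical embedding of `ℂ^{⟨n⟩}` into `ℓ²(ℤ)`. -/
noncomputable def Vemb (n : ℕ) (ψ : Fin n → ℂ) : lp (fun _ : ℤ => ℂ) 2 :=
  ∑ j : Fin n, ψ j • lp.single 2 (j : ℤ) (1 : ℂ)

/-- The `n×n` compression matrix `(V_n^* A V_n)_{j,l} = ⟨1_{j}, A 1_{l}⟩`. -/
noncomputable def compressMat (A : lp (fun _ : ℤ => ℂ) 2 →L[ℂ] lp (fun _ : ℤ => ℂ) 2)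
    (n : ℕ) : Matrix (Fin n) (Fin n) ℂ :=
  fun j l => inner ℂ (lp.single 2 (j : ℤ) (1 : ℂ)) (A (lp.single 2 (l : ℤ) (1 : ℂ)))

private lemma coeFn_finset_sum {ι : Type*} (s : Finset ι) (f : ι → Lp ℂ 2 μ2π) :
    ((∑ i ∈ s, f i : Lp ℂ 2 μ2π) : ℝ → ℂ) =ᵐ[μ2π] fun x => ∑ i ∈ s, (f i : ℝ → ℂ) x := by
  classical
  induction s using Finset.induction_on with
  | empty =>
    filter_upwards [Lp.coeFn_zero ℂ 2 μ2π] with x hx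
    simpa using hx
  | insert _ _ h ih =>
    rename_i i s
    rw [Finset.sum_insert h]
    filter_upwards [Lp.coeFn_add (f i) (∑ j ∈ s, f j), ih] with x hx hx2
    rw [Finset.sum_insert h, hx, Pi.add_apply, hx2]

theorem zero_eigenvalue_of_compression_implies_symbol_ae_zero
    (a : ℝ → ℝ) (ha_meas : Measurable a) (ha_nonneg : ∀ x, 0 ≤ a x)
    (ha_bdd : ∃ C, ∀ x, a x ≤ C)
    (F : lp (fun _ : ℤ => ℂ) 2 ≃ₗᵢ[ℂ] Lp ℂ 2 μ2π)
    (hF : ∀ k : ℤ, (F (lp.single 2 k (1 : ℂ)) : ℝ → ℂ)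
      =ᵐ[μ2π] fun x => Complex.exp (Complex.I * k * x) / Real.sqrt (2 * Real.pi))
    (A : lp (fun _ : ℤ => ℂ) 2 →L[ℂ] lp (fun _ : ℤ => ℂ) 2)
    (hA : ∀ ψ, (F (A ψ) : ℝ → ℂ) =ᵐ[μ2π] fun x => (a x : ℂ) * (F ψ : ℝ → ℂ) x)
    (n : ℕ) (hn : 1 ≤ n)
    (heig : ∃ ψ : Fin n → ℂ, ψ ≠ 0 ∧ (compressMat A n).mulVec ψ = 0) :
    a =ᵐ[μ2π] 0 := by
  classical
  obtain ⟨ψ, hψ, hmul⟩ := heig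
  obtain ⟨C, hC⟩ := ha_bdd
  set v : lp (fun _ : ℤ => ℂ) 2 := Vemb n ψ with hv
  set P : ℝ → ℂ := fun x => ∑ j : Fin n, ψ j * Complex.exp (Complex.I * (j : ℤ) * x) with hP
  -- Step 1 : ⟪v, A v⟫ = 0
  have hinner : (inner ℂ v (A v) : ℂ) = 0 := by
    have hAv : A v = ∑ l : Fin n, ψ l • A (lp.single 2 ((l : ℤ)) (1 : ℂ)) := by
      rw [hv, Vemb, map_sum]
      exact Finset.sum_congr rfl fun l _ => A.map_smul _ _
    rw [hAv, hv, Vemb, sum_inner]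
    have hterm : ∀ j : Fin n,
        (inner ℂ (ψ j • lp.single 2 ((j : ℤ)) (1 : ℂ))
          (∑ l : Fin n, ψ l • A (lp.single 2 ((l : ℤ)) (1 : ℂ))) : ℂ)
        = (starRingEnd ℂ) (ψ j) * ((compressMat A n).mulVec ψ j) := by
      intro j
      simp only [inner_smul_left, inner_sum, inner_smul_right, Matrix.mulVec,
        dotProduct, compressMat, Finset.mul_sum]
      exact Finset.sum_congr rfl fun l _ => by ring
    simp only [hterm, hmul, Pi.zero_apply, mul_zero, Finset.sum_const_zero]
  -- Step 2 : the L² inner product vanishes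
  have hinner2 : (inner ℂ (F v) (F (A v)) : ℂ) = 0 := by
    rw [LinearIsometryEquiv.inner_map_map]; exact hinner
  set g : ℝ → ℂ := (F v : ℝ → ℂ) with hg
  -- Step 3 : integral formula
  have hint0 : ∫ x, ((a x * ‖g x‖ ^ 2 : ℝ) : ℂ) ∂μ2π = 0 := by
    rw [← hinner2, MeasureTheory.L2.inner_def]
    apply integral_congr_ae
    filter_upwards [hA v] with x hx
    rw [RCLike.inner_apply', hx]
    rw [show (starRingEnd ℂ) (g x) * ((a x : ℂ) * g x)
        = (a x : ℂ) * (g x * (starRingEnd ℂ) (g x)) by ring,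
      Complex.mul_conj, Complex.normSq_eq_norm_sq]
    push_cast
    ring
  have hint0' : ∫ x, a x * ‖g x‖ ^ 2 ∂μ2π = 0 := by
    have h := integral_ofReal (𝕜 := ℂ) (f := fun x => a x * ‖g x‖ ^ 2) (μ := μ2π)
    have h2 : ((∫ x, a x * ‖g x‖ ^ 2 ∂μ2π : ℝ) : ℂ) = 0 := h.symm.trans hint0
    exact_mod_cast h2
  -- Step 4 : integrability and nonnegativity give a·‖g‖² = 0 a.e.
  have hg2int : Integrable (fun x => ‖g x‖ ^ 2) μ2π := by
    have h := (Lp.memLp (F v)).integrable_norm_rpow two_ne_zero ENNReal.ofNat_ne_top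
    refine h.congr (Filter.Eventually.of_forall fun x => ?_)
    norm_num [Real.rpow_natCast, hg]
  have hint : Integrable (fun x => a x * ‖g x‖ ^ 2) μ2π := by
    refine hg2int.bdd_mul ha_meas.aestronglyMeasurable (c := C) (Filter.Eventually.of_forall fun x => ?_)
    rw [Real.norm_eq_abs, abs_of_nonneg (ha_nonneg x)]
    exact hC x
  have hzero : (fun x => a x * ‖g x‖ ^ 2) =ᵐ[μ2π] 0 := by
    rw [← integral_eq_zero_iff_of_nonneg (fun x => mul_nonneg (ha_nonneg x) (sq_nonneg _)) hint]
    exact hint0'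
  -- Step 5 : g equals P / √(2π) a.e.
  have hgP : g =ᵐ[μ2π] fun x => P x / Real.sqrt (2 * Real.pi) := by
    have hFv : F v = ∑ j : Fin n, ψ j • F (lp.single 2 ((j : ℤ)) (1 : ℂ)) := by
      rw [hv, Vemb, map_sum]
      exact Finset.sum_congr rfl fun j _ => F.map_smul _ _
    have h1 := coeFn_finset_sum Finset.univ
      (fun j : Fin n => ψ j • F (lp.single 2 ((j : ℤ)) (1 : ℂ)))
    have h2 : ∀ᵐ x ∂μ2π, ∀ j : Fin n,
        ((ψ j • F (lp.single 2 ((j : ℤ)) (1 : ℂ)) : Lp ℂ 2 μ2π) : ℝ → ℂ) x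
          = ψ j * (Complex.exp (Complex.I * (j : ℤ) * x) / Real.sqrt (2 * Real.pi)) := by
      rw [MeasureTheory.ae_all_iff]
      intro j
      filter_upwards [Lp.coeFn_smul (ψ j) (F (lp.single 2 ((j : ℤ)) (1 : ℂ))), hF (j : ℤ)]
        with x hx hx2
      rw [hx, Pi.smul_apply, smul_eq_mul, hx2]
    filter_upwards [h1, h2] with x hx hx2
    have hx' : g x = ∑ j : Fin n,
        ((ψ j • F (lp.single 2 ((j : ℤ)) (1 : ℂ)) : Lp ℂ 2 μ2π) : ℝ → ℂ) x := by
      rw [hg, hFv]; exact hx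
    rw [hx', Finset.sum_congr rfl fun j _ => hx2 j]
    simp only [hP, Finset.sum_div]
    exact Finset.sum_congr rfl fun j _ => (mul_div_assoc _ _ _).symm
  -- Step 6 : P is nonzero a.e.
  have hPne : ∀ᵐ x ∂μ2π, P x ≠ 0 := by
    set Q : Polynomial ℂ := ∑ j : Fin n, Polynomial.C (ψ j) * Polynomial.X ^ (j : ℕ) with hQ
    have hQne : Q ≠ 0 := by
      intro h
      apply hψ
      funext j
      have hcoeff : Q.coeff (j : ℕ) = ψ j := by
        rw [hQ, Polynomial.finset_sum_coeff, Finset.sum_eq_single j]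
        · simp
        · intro l _ hl
          rw [Polynomial.coeff_C_mul, Polynomial.coeff_X_pow, if_neg, mul_zero]
          exact fun hc => hl (Fin.ext hc.symm)
        · simp
      rw [h] at hcoeff
      simpa using hcoeff.symm
    have hPQ : ∀ x : ℝ, P x = Q.eval (Complex.exp (Complex.I * x)) := by
      intro x
      simp only [hP, hQ, Polynomial.eval_finset_sum, Polynomial.eval_mul, Polynomial.eval_C,
        Polynomial.eval_pow, Polynomial.eval_X]
      refine Finset.sum_congr rfl fun j _ => ?_
      rw [← Complex.exp_nat_mul]
      congr 2
      push_cast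
      ring
    have hroots := Polynomial.finite_setOf_isRoot hQne
    have hinj : Set.InjOn (fun x : ℝ => Complex.exp (Complex.I * x))
        (Set.Ico (0:ℝ) (2 * Real.pi)) := by
      intro x hx y hy hxy
      simp only at hxy
      rw [Complex.exp_eq_exp_iff_exists_int] at hxy
      obtain ⟨m, hm⟩ := hxy
      have hxc : (x : ℂ) = y + m * (2 * Real.pi) := by
        refine mul_left_cancel₀ Complex.I_ne_zero ?_
        rw [hm]; push_cast; ring
      have hxr : x = y + m * (2 * Real.pi) := by exact_mod_cast hxc
      have hm0 : m = 0 := by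
        by_contra hm0
        have h1 : (1 : ℝ) ≤ |(m : ℝ)| := by
          have := Int.one_le_abs (hm0 : m ≠ 0)
          exact_mod_cast this
        have hpi : 0 < 2 * Real.pi := by positivity
        have h2 : 2 * Real.pi ≤ |x - y| := by
          rw [hxr, show y + m * (2 * Real.pi) - y = m * (2 * Real.pi) by ring, abs_mul,
            abs_of_pos hpi]
          nlinarith
        have hx2 := hx.2; have hy1 := hy.1; have hx1 := hx.1; have hy2 := hy.2
        cases abs_cases (x - y) with
        | inl h => nlinarith [h.1]
        | inr h => nlinarith [h.1]
      rw [hxr, hm0]; push_cast; ring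
    have hfin : (Set.Ico (0:ℝ) (2 * Real.pi) ∩ {x | P x = 0}).Finite := by
      refine Set.Finite.of_finite_image (hroots.subset ?_)
        (hinj.mono Set.inter_subset_left)
      rintro z ⟨x, hx, rfl⟩
      simpa [Polynomial.IsRoot, ← hPQ] using hx.2
    have hPcont : Continuous P := by
      simp only [hP]
      exact continuous_finset_sum _ fun j _ =>
        continuous_const.mul (Complex.continuous_exp.comp (continuous_const.mul Complex.continuous_ofReal))
    have hmeas0 : μ2π {x | P x = 0} = 0 := by
      have hclosed : IsClosed {x : ℝ | P x = 0} := isClosed_eq hPcont continuous_const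
      rw [μ2π, Measure.restrict_apply hclosed.measurableSet]
      rw [Set.inter_comm]
      exact hfin.measure_zero _
    rw [MeasureTheory.ae_iff]
    simpa only [not_not] using hmeas0
  -- Step 7 : conclude
  filter_upwards [hzero, hgP, hPne] with x h0 hgx hPx
  simp only [Pi.zero_apply] at h0 ⊢
  have hgne : g x ≠ 0 := by
    rw [hgx]
    refine div_ne_zero hPx ?_
    simp only [ne_eq, Complex.ofReal_eq_zero]
    exact ne_of_gt (Real.sqrt_pos.mpr (by positivity))
  have hsq : ‖g x‖ ^ 2 ≠ 0 := pow_ne_zero _ (norm_ne_zero_iff.mpr hgne)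
  exact (mul_eq_zero.mp h0).resolve_right hsq
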